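/- Let T1 be a real m1×n matrix, T2 a real m2×n matrix, τ1 ∈ ℝ^{m1} and τ2 ∈ ℝ^{m2}, and suppose the polyhedra X1 := {x ∈ ℝⁿ : T1 x ≤ τ1} and X2 := {x ∈ ℝⁿ : T2 x ≤ τ2} are both nonempty. Then X1 ⊆ X2 holds if and only if there exists a nonnegative real m2×m1 matrix P such that P T1 = T2 and P τ1 ≤ τ2. -/

import Mathlib

open scoped InnerProductSpace
open Finset

namespace FarkasAux

variable {N : ℕ}

/-- The finitely generated cone of a family of vectors. -/
def coneSet {k : ℕ} (v : Fin k → EuclideanSpace ℝ (Fin N)) : Set (EuclideanSpace ℝ (Fin N)) :=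
  {x | ∃ y : Fin k → ℝ, (∀ i, 0 ≤ y i) ∧ x = ∑ i, y i • v i}

lemma euc_sum_apply {k : ℕ} (v : Fin k → EuclideanSpace ℝ (Fin N)) (y : Fin k → ℝ) (j : Fin N) :
    (∑ i, y i • v i) j = ∑ i, y i * v i j := by
  rw [WithLp.ofLp_sum, Finset.sum_apply]; simp

lemma mem_coneSet_self {k : ℕ} (v : Fin k → EuclideanSpace ℝ (Fin N)) (i : Fin k) :
    v i ∈ coneSet v := by
  refine ⟨fun j => if j = i then 1 else 0, fun j => by positivity, ?_⟩
  rw [Finset.sum_eq_single i] <;> simp +contextual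

lemma coneSet_isClosed : ∀ (k : ℕ) (v : Fin k → EuclideanSpace ℝ (Fin N)),
    IsClosed (coneSet v) := by
  intro k
  induction k with
  | zero =>
    intro v
    have : coneSet v = {0} := by
      apply Set.eq_singleton_iff_unique_mem.mpr
      refine ⟨⟨0, fun i => le_rfl, by simp⟩, ?_⟩
      rintro x ⟨y, -, rfl⟩
      simp
    rw [this]; exact isClosed_singleton
  | succ k ih =>
    intro v
    by_cases hv : LinearIndependent ℝ v
    · -- linearly independent generators: closed embedding of the nonneg orthant
      let f : (Fin (k + 1) → ℝ) →ₗ[ℝ] EuclideanSpace ℝ (Fin N) :=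
        { toFun := fun y => ∑ i, y i • v i
          map_add' := by intro a b; simp [add_smul, Finset.sum_add_distrib]
          map_smul' := by intro c a; simp [smul_smul, Finset.smul_sum] }
      have hker : LinearMap.ker f = ⊥ := by
        rw [LinearMap.ker_eq_bot']
        intro y hy
        funext i
        exact Fintype.linearIndependent_iff.mp hv y hy i
      have hce := f.isClosedEmbedding_of_injective hker
      have horth : IsClosed {y : Fin (k + 1) → ℝ | ∀ i, 0 ≤ y i} := by
        have : {y : Fin (k + 1) → ℝ | ∀ i, 0 ≤ y i} = ⋂ i, {y | 0 ≤ y i} := by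
          ext y; simp
        rw [this]
        exact isClosed_iInter fun i => isClosed_Ici.preimage (continuous_apply i)
      have : coneSet v = f '' {y | ∀ i, 0 ≤ y i} := by
        ext x
        constructor
        · rintro ⟨y, hy, rfl⟩; exact ⟨y, hy, rfl⟩
        · rintro ⟨y, hy, rfl⟩; exact ⟨y, hy, rfl⟩
      rw [this]
      exact hce.isClosedMap _ horth
    · -- dependent: express as finite union of cones with one fewer generator
      obtain ⟨g, hg0, i₁, hgi₁⟩ := Fintype.not_linearIndependent_iff.mp hv
      have key : ∃ μ : Fin (k + 1) → ℝ, ∑ i, μ i • v i = 0 ∧ ∃ i, 0 < μ i := by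
        rcases lt_or_gt_of_ne hgi₁ with h | h
        · exact ⟨-g, by simpa using hg0, i₁, by simpa using h⟩
        · exact ⟨g, hg0, i₁, h⟩
      obtain ⟨μ, hμ0, hμpos⟩ := key
      have hunion : coneSet v = ⋃ i : Fin (k + 1), coneSet (v ∘ i.succAbove) := by
        ext x
        constructor
        · rintro ⟨y, hy, rfl⟩
          set s : Finset (Fin (k + 1)) := Finset.univ.filter (fun i => 0 < μ i) with hs
          have hsne : s.Nonempty := by
            obtain ⟨i, hi⟩ := hμpos
            exact ⟨i, by simp [hs, hi]⟩
          obtain ⟨i₀, hi₀s, hmin⟩ := s.exists_min_image (fun i => y i / μ i) hsne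
          have hμi₀ : 0 < μ i₀ := by
            simpa [hs] using hi₀s
          set t : ℝ := y i₀ / μ i₀ with ht
          have ht0 : 0 ≤ t := div_nonneg (hy i₀) hμi₀.le
          set y' : Fin (k + 1) → ℝ := fun j => y j - t * μ j with hy'
          have hy'0 : ∀ j, 0 ≤ y' j := by
            intro j
            by_cases hj : 0 < μ j
            · have : t ≤ y j / μ j := hmin j (by simp [hs, hj])
              have := (le_div_iff₀ hj).mp this
              simp [hy']; linarith
            · push_neg at hj
              have : t * μ j ≤ 0 := mul_nonpos_of_nonneg_of_nonpos ht0 hj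
              have := hy j
              simp [hy']; linarith
          have hy'i₀ : y' i₀ = 0 := by
            simp [hy', ht, div_mul_cancel₀ _ hμi₀.ne']
          have hsum : ∑ j, y' j • v j = ∑ j, y j • v j := by
            simp only [hy', sub_smul, Finset.sum_sub_distrib, mul_smul]
            rw [← Finset.smul_sum, hμ0, smul_zero, sub_zero]
          refine Set.mem_iUnion.mpr ⟨i₀, fun j => y' (i₀.succAbove j), fun j => hy'0 _, ?_⟩
          rw [← hsum, Fin.sum_univ_succAbove (fun j => y' j • v j) i₀, hy'i₀, zero_smul, zero_add]
          rfl
        · intro hx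
          obtain ⟨i, y, hy, rfl⟩ := Set.mem_iUnion.mp hx
          refine ⟨Fin.insertNth (α := fun _ => ℝ) i 0 y, ?_, ?_⟩
          · intro j
            rcases eq_or_ne j i with hj | hj
            · subst hj; simp
            · obtain ⟨j', rfl⟩ := Fin.exists_succAbove_eq hj
              simpa using hy j'
          · rw [Fin.sum_univ_succAbove
              (fun j => Fin.insertNth (α := fun _ => ℝ) i 0 y j • v j) i]
            simp [Function.comp]
      rw [hunion]
      exact isClosed_iUnion_of_finite fun i => ih (v ∘ i.succAbove)

lemma coneSet_convexity {k : ℕ} (v : Fin k → EuclideanSpace ℝ (Fin N)) :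
    ∃ K : ConvexCone ℝ (EuclideanSpace ℝ (Fin N)), (K : Set (EuclideanSpace ℝ (Fin N))) = coneSet v := by
  refine ⟨{ carrier := coneSet v
            smul_mem' := ?_
            add_mem' := ?_ }, rfl⟩
  · rintro c hc x ⟨y, hy, rfl⟩
    exact ⟨fun i => c * y i, fun i => mul_nonneg hc.le (hy i),
      by rw [Finset.smul_sum]; simp [smul_smul]⟩
  · rintro x ⟨y, hy, rfl⟩ x' ⟨y', hy', rfl⟩
    exact ⟨fun i => y i + y' i, fun i => add_nonneg (hy i) (hy' i),
      by simp [add_smul, Finset.sum_add_distrib]⟩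

/-- Homogeneous Farkas via cone separation. -/
lemma farkas_sep {k : ℕ} (v : Fin k → EuclideanSpace ℝ (Fin N))
    (b : EuclideanSpace ℝ (Fin N)) (hb : b ∉ coneSet v) :
    ∃ x : EuclideanSpace ℝ (Fin N), (∀ i, 0 ≤ ⟪v i, x⟫_ℝ) ∧ ⟪x, b⟫_ℝ < 0 := by
  obtain ⟨K, hK⟩ := coneSet_convexity v
  have hKne : (K : Set (EuclideanSpace ℝ (Fin N))).Nonempty := by
    rw [hK]; exact ⟨0, 0, fun i => le_refl _, by simp⟩
  have hKcl : IsClosed (K : Set (EuclideanSpace ℝ (Fin N))) := by rw [hK]; exact coneSet_isClosed k v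
  have hbK : b ∉ K := by
    rw [← SetLike.mem_coe, hK]; exact hb
  have hpt : K.Pointed := by
    show (0 : EuclideanSpace ℝ (Fin N)) ∈ K
    rw [← SetLike.mem_coe, hK]; exact ⟨0, fun i => le_refl _, by simp⟩
  obtain ⟨x, hx1, hx2⟩ :=
    ProperCone.hyperplane_separation' (C := ⟨K.toPointedCone hpt, hKcl⟩) (x₀ := b) hbK
  refine ⟨x, fun i => hx1 (v i) ?_, by rw [real_inner_comm]; exact hx2⟩
  have : v i ∈ (K : Set (EuclideanSpace ℝ (Fin N))) := by
    rw [hK]; exact mem_coneSet_self v i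
  exact this

/-- Affine Farkas lemma: if `Ax ≤ b` is satisfiable and implies `c ⬝ x ≤ d`,
then `c` is a nonnegative combination of the rows of `A` with the corresponding
combination of `b` at most `d`. -/
lemma affine_farkas {n m : ℕ} (A : Matrix (Fin m) (Fin n) ℝ) (b : Fin m → ℝ)
    (c : Fin n → ℝ) (d : ℝ) (hne : ∃ x, A.mulVec x ≤ b)
    (h : ∀ x, A.mulVec x ≤ b → (∑ j, c j * x j) ≤ d) :
    ∃ y : Fin m → ℝ, (∀ i, 0 ≤ y i) ∧ (∀ j, ∑ i, y i * A i j = c j) ∧ ∑ i, y i * b i ≤ d := by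
  classical
  -- homogenization vectors in ℝ^{n+1}
  set v : Fin (m + 1) → EuclideanSpace ℝ (Fin (n + 1)) :=
    Fin.snoc (fun i => WithLp.toLp 2 (Fin.snoc (fun j => A i j) (b i) : Fin (n + 1) → ℝ))
      (WithLp.toLp 2 (Fin.snoc (fun _ => 0) 1)) with hv
  set w : EuclideanSpace ℝ (Fin (n + 1)) := WithLp.toLp 2 (Fin.snoc c d : Fin (n + 1) → ℝ) with hw
  have hwmem : w ∈ coneSet v := by
    by_contra hnot
    obtain ⟨x, hx1, hx2⟩ := farkas_sep v w hnot
    set x' : Fin n → ℝ := fun j => x j.castSucc with hx'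
    set t : ℝ := x (Fin.last n) with hT
    have hinner : ∀ u : EuclideanSpace ℝ (Fin (n + 1)), ⟪u, x⟫_ℝ = ∑ j, u j * x j := by
      intro u; simp [PiLp.inner_apply, mul_comm]
    have ht0 : 0 ≤ t := by
      have := hx1 (Fin.last m)
      rw [hinner] at this
      simpa [hv, Fin.sum_univ_castSucc] using this
    have hrow : ∀ i : Fin m, 0 ≤ ∑ j, A i j * x' j + b i * t := by
      intro i
      have := hx1 i.castSucc
      rw [hinner] at this
      simpa [hv, Fin.sum_univ_castSucc, hx', hT] using this
    have hcx : ∑ j, c j * x' j + d * t < 0 := by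
      have := hx2
      rw [real_inner_comm, hinner] at this
      simpa [hw, Fin.sum_univ_castSucc, hx', hT] using this
    rcases eq_or_lt_of_le ht0 with hteq | htpos
    · -- t = 0 : direction of unboundedness
      obtain ⟨x₀, hx₀⟩ := hne
      have hcx' : ∑ j, c j * x' j < 0 := by
        rw [← hteq] at hcx; simpa using hcx
      set S : ℝ := ∑ j, c j * x' j with hS
      set lam : ℝ := (|d| + |∑ j, c j * x₀ j| + 1) / (-S) with hlam
      have hlam0 : 0 ≤ lam := div_nonneg (by positivity) (by linarith)
      have hfeas : A.mulVec (fun j => x₀ j - lam * x' j) ≤ b := by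
        intro i
        have hA1 : 0 ≤ ∑ j, A i j * x' j := by
          have := hrow i; rw [← hteq] at this; simpa using this
        have h2 : A.mulVec x₀ i ≤ b i := hx₀ i
        simp only [Matrix.mulVec, dotProduct] at h2 ⊢
        have hexp : ∑ j, A i j * (x₀ j - lam * x' j)
            = ∑ j, A i j * x₀ j - lam * ∑ j, A i j * x' j := by
          rw [Finset.mul_sum, ← Finset.sum_sub_distrib]
          exact Finset.sum_congr rfl fun j _ => by ring
        rw [hexp]
        nlinarith [mul_nonneg hlam0 hA1]
      have hled := h _ hfeas
      have hexp : ∑ j, c j * (x₀ j - lam * x' j)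
          = ∑ j, c j * x₀ j - lam * S := by
        rw [hS, Finset.mul_sum, ← Finset.sum_sub_distrib]
        exact Finset.sum_congr rfl fun j _ => by ring
      rw [hexp] at hled
      have hlamval : lam * S = -(|d| + |∑ j, c j * x₀ j| + 1) := by
        rw [hlam, div_neg, neg_mul, div_mul_cancel₀ _ (ne_of_lt hcx')]
      rw [hlamval] at hled
      have h3 : d ≤ |d| := le_abs_self d
      have h4 : -|∑ j, c j * x₀ j| ≤ ∑ j, c j * x₀ j := neg_abs_le _
      linarith
    · -- t > 0 : scaled point is feasible
      set x₁ : Fin n → ℝ := fun j => -(x' j) / t with hx₁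
      have hfeas : A.mulVec x₁ ≤ b := by
        intro i
        have hri := hrow i
        simp only [Matrix.mulVec, dotProduct]
        have hexp : ∑ j, A i j * x₁ j = (∑ j, -(A i j * x' j)) / t := by
          rw [Finset.sum_div]
          exact Finset.sum_congr rfl fun j _ => by rw [hx₁]; ring
        rw [hexp, div_le_iff₀ htpos, Finset.sum_neg_distrib]
        linarith
      have hled := h _ hfeas
      have hexp : ∑ j, c j * x₁ j = (∑ j, -(c j * x' j)) / t := by
        rw [Finset.sum_div]
        exact Finset.sum_congr rfl fun j _ => by rw [hx₁]; ring
      rw [hexp, div_le_iff₀ htpos, Finset.sum_neg_distrib] at hled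
      nlinarith
  obtain ⟨y, hy0, hyeq⟩ := hwmem
  have hcoord : ∀ p : Fin (n + 1), w p = ∑ i, y i * v i p := by
    intro p
    rw [hyeq, euc_sum_apply]
  refine ⟨fun i => y i.castSucc, fun i => hy0 _, ?_, ?_⟩
  · intro j
    have := hcoord j.castSucc
    simp [hv, hw, Fin.sum_univ_castSucc] at this
    exact this.symm
  · have := hcoord (Fin.last n)
    simp [hv, hw, Fin.sum_univ_castSucc] at this
    have h5 := hy0 (Fin.last m)
    linarith

end FarkasAux

/-- Extended Farkas lemma for polytope containment: for nonempty polyhedra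
`X1 = {x : T1 x ≤ τ1}` and `X2 = {x : T2 x ≤ τ2}`, containment `X1 ⊆ X2` holds
iff there is a nonnegative matrix `P` with `P T1 = T2` and `P τ1 ≤ τ2`. -/
theorem farkas_polytope_containment {n m1 m2 : ℕ}
    (T1 : Matrix (Fin m1) (Fin n) ℝ) (T2 : Matrix (Fin m2) (Fin n) ℝ)
    (τ1 : Fin m1 → ℝ) (τ2 : Fin m2 → ℝ)
    (h1 : {x : Fin n → ℝ | T1.mulVec x ≤ τ1}.Nonempty)
    (h2 : {x : Fin n → ℝ | T2.mulVec x ≤ τ2}.Nonempty) :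
    {x : Fin n → ℝ | T1.mulVec x ≤ τ1} ⊆ {x : Fin n → ℝ | T2.mulVec x ≤ τ2} ↔
      ∃ P : Matrix (Fin m2) (Fin m1) ℝ,
        (∀ i j, 0 ≤ P i j) ∧ P * T1 = T2 ∧ P.mulVec τ1 ≤ τ2 := by
  constructor
  · intro hsub
    have key : ∀ i : Fin m2, ∃ y : Fin m1 → ℝ, (∀ k, 0 ≤ y k) ∧
        (∀ j, ∑ k, y k * T1 k j = T2 i j) ∧ ∑ k, y k * τ1 k ≤ τ2 i := by
      intro i
      apply FarkasAux.affine_farkas T1 τ1 (fun j => T2 i j) (τ2 i) h1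
      intro x hx
      have := hsub hx i
      simpa [Matrix.mulVec, dotProduct] using this
    choose y hy0 hyeq hyle using key
    refine ⟨fun i k => y i k, fun i k => hy0 i k, ?_, ?_⟩
    · ext i j
      exact Matrix.mul_apply.trans (hyeq i j)
    · intro i
      simpa [Matrix.mulVec, dotProduct] using hyle i
  · rintro ⟨P, hP0, hPT, hPτ⟩ x hx
    intro i
    have h1' : (P * T1).mulVec x i = P.mulVec (T1.mulVec x) i := by
      rw [← Matrix.mulVec_mulVec]
    have h2' : P.mulVec (T1.mulVec x) i ≤ P.mulVec τ1 i := by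
      simp only [Matrix.mulVec, dotProduct]
      exact Finset.sum_le_sum fun k _ => mul_le_mul_of_nonneg_left (hx k) (hP0 i k)
    calc T2.mulVec x i = (P * T1).mulVec x i := by rw [hPT]
      _ = P.mulVec (T1.mulVec x) i := h1'
      _ ≤ P.mulVec τ1 i := h2'
      _ ≤ τ2 i := hPτ i
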